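/- Let V be an n-dimensional Euclidean vector space, ω a p-form, and S a trace-free symmetric endomorphism of V. Then |Sω|² ≤ (p(n-p)/n)·|S|²·|ω|², where (Sω)(X₁,…,X_p) = Σᵢ ω(X₁,…,SXᵢ,…,X_p), |S|² is the sum of squares of the eigenvalues of S, and |ω|² = Σ_{i₁,…,i_p} ω_{i₁…i_p}². -/
import Mathlib

open Finset

namespace NSDAaux

variable {n p : ℕ}

def pull (U : Matrix (Fin n) (Fin n) ℝ) (f : (Fin p → Fin n) → ℝ) :
    (Fin p → Fin n) → ℝ :=
  fun I => ∑ J : Fin p → Fin n, (∏ k, U (J k) (I k)) * f J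

lemma sum_sq_pull (U : Matrix (Fin n) (Fin n) ℝ)
    (hU : ∀ a b, (∑ m, U a m * U b m) = if a = b then (1:ℝ) else 0)
    (f : (Fin p → Fin n) → ℝ) :
    ∑ I, (pull U f I) ^ 2 = ∑ I, (f I) ^ 2 := by
  have key : ∀ J J' : Fin p → Fin n,
      (∑ I : Fin p → Fin n, ∏ k, (U (J k) (I k) * U (J' k) (I k)))
        = if J = J' then (1:ℝ) else 0 := by
    intro J J'
    rw [← Fintype.prod_sum (fun k i => U (J k) i * U (J' k) i)]
    simp_rw [hU]
    rw [Finset.prod_boole]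
    simp [funext_iff]
  calc ∑ I, (pull U f I)^2
      = ∑ I : Fin p → Fin n, ∑ J : Fin p → Fin n, ∑ J' : Fin p → Fin n, (f J * f J') * ∏ k, (U (J k) (I k) * U (J' k) (I k)) := by
        refine Finset.sum_congr rfl fun I _ => ?_
        rw [pull, pow_two, Finset.sum_mul_sum]
        refine Finset.sum_congr rfl fun J _ => Finset.sum_congr rfl fun J' _ => ?_
        rw [Finset.prod_mul_distrib]; ring
    _ = ∑ J : Fin p → Fin n, ∑ J' : Fin p → Fin n, (f J * f J') * ∑ I : Fin p → Fin n, ∏ k, (U (J k) (I k) * U (J' k) (I k)) := by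
        rw [Finset.sum_comm]
        refine Finset.sum_congr rfl fun J _ => ?_
        rw [Finset.sum_comm]
        refine Finset.sum_congr rfl fun J' _ => ?_
        rw [Finset.mul_sum]
    _ = ∑ J, ∑ J', (f J * f J') * (if J = J' then 1 else 0) := by
        simp_rw [key]
    _ = ∑ J, (f J)^2 := by
        refine Finset.sum_congr rfl fun J _ => ?_
        simp [Finset.sum_ite_eq, pow_two]

lemma pull_eq_zero_of_not_injective (U : Matrix (Fin n) (Fin n) ℝ)
    (ω : (Fin p → Fin n) → ℝ)
    (hω : ∀ (I : Fin p → Fin n) (a b : Fin p), a ≠ b → ω (I ∘ Equiv.swap a b) = - ω I)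
    (I : Fin p → Fin n) (hI : ¬ Function.Injective I) :
    pull U ω I = 0 := by
  obtain ⟨a, b, hIab, hab⟩ : ∃ a b, I a = I b ∧ a ≠ b := by
    simp only [Function.Injective, not_forall] at hI
    obtain ⟨a, b, h1, h2⟩ := hI
    exact ⟨a, b, h1, h2⟩
  have hIswap : ∀ k, I (Equiv.swap a b k) = I k := by
    intro k
    rcases eq_or_ne k a with rfl | ha
    · simp [Equiv.swap_apply_left, hIab]
    rcases eq_or_ne k b with rfl | hb
    · simp [Equiv.swap_apply_right, hIab]
    · rw [Equiv.swap_apply_of_ne_of_ne ha hb]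
  have hbij : Function.Bijective (fun J : Fin p → Fin n => J ∘ Equiv.swap a b) := by
    apply Function.Involutive.bijective
    intro J
    funext k
    simp [Function.comp, Equiv.swap_apply_self]
  have key : pull U ω I = - pull U ω I := by
    calc pull U ω I
        = ∑ J : Fin p → Fin n,
            (∏ k, U ((J ∘ Equiv.swap a b) k) (I k)) * ω (J ∘ Equiv.swap a b) := by
          exact (Fintype.sum_bijective _ hbij
            (fun J => (∏ k, U ((J ∘ Equiv.swap a b) k) (I k)) * ω (J ∘ Equiv.swap a b))
            (fun J => (∏ k, U (J k) (I k)) * ω J) (fun J => rfl)).symm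
      _ = ∑ J : Fin p → Fin n, (∏ k, U (J k) (I k)) * (- ω J) := by
          refine Finset.sum_congr rfl fun J _ => ?_
          rw [hω J a b hab]
          congr 1
          calc (∏ k, U (J (Equiv.swap a b k)) (I k))
              = ∏ k, U (J (Equiv.swap a b k)) (I (Equiv.swap a b k)) := by
                refine Finset.prod_congr rfl fun k _ => by rw [hIswap]
            _ = ∏ k, U (J k) (I k) :=
                Equiv.prod_comp (Equiv.swap a b) (fun k => U (J k) (I k))
      _ = - pull U ω I := by
          rw [pull, ← Finset.sum_neg_distrib]
          exact Finset.sum_congr rfl fun J _ => by ring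
  linarith

lemma pull_action (U S : Matrix (Fin n) (Fin n) ℝ) (lam : Fin n → ℝ)
    (hSU : ∀ r i, (∑ m, S r m * U m i) = lam i * U r i)
    (ω Sω : (Fin p → Fin n) → ℝ)
    (hSω : ∀ I, Sω I = ∑ k, ∑ j, S j (I k) * ω (Function.update I k j))
    (I : Fin p → Fin n) :
    pull U Sω I = (∑ k, lam (I k)) * pull U ω I := by
  have main : ∀ c : Fin p,
      (∑ J : Fin p → Fin n, (∏ k, U (J k) (I k)) *
        ∑ j, S j (J c) * ω (Function.update J c j))
      = lam (I c) * pull U ω I := by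
    intro c
    let e : ((Fin p → Fin n) × Fin n) ≃ ((Fin p → Fin n) × Fin n) :=
      ⟨fun x => (Function.update x.1 c x.2, x.1 c),
       fun x => (Function.update x.1 c x.2, x.1 c),
       fun x => by simp [Function.update_idem],
       fun x => by simp [Function.update_idem]⟩
    have he : ∀ x : (Fin p → Fin n) × Fin n,
        e x = (Function.update x.1 c x.2, x.1 c) := fun x => rfl
    have hprod : ∀ (J : Fin p → Fin n) (j : Fin n),
        (∏ k, U (Function.update J c j k) (I k))
          = U j (I c) * ∏ k ∈ univ.erase c, U (J k) (I k) := by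
      intro J j
      rw [← Finset.mul_prod_erase univ (fun k => U (Function.update J c j k) (I k))
        (mem_univ c)]
      congr 1
      · rw [Function.update_self]
      · exact Finset.prod_congr rfl fun k hk => by
          rw [Function.update_of_ne (Finset.ne_of_mem_erase hk)]
    calc (∑ J : Fin p → Fin n, (∏ k, U (J k) (I k)) *
            ∑ j, S j (J c) * ω (Function.update J c j))
        = ∑ x : (Fin p → Fin n) × Fin n,
            (∏ k, U (x.1 k) (I k)) * (S x.2 (x.1 c) * ω (Function.update x.1 c x.2)) := by
          rw [Fintype.sum_prod_type]
          exact Finset.sum_congr rfl fun J _ => by rw [Finset.mul_sum]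
      _ = ∑ x : (Fin p → Fin n) × Fin n,
            (∏ k, U (Function.update x.1 c x.2 k) (I k)) * (S (x.1 c) x.2 * ω x.1) := by
          refine Fintype.sum_equiv e _ _ fun x => ?_
          rw [he]
          simp [Function.update_idem]
      _ = ∑ J : Fin p → Fin n, (∏ k ∈ univ.erase c, U (J k) (I k)) * ω J *
            (∑ j, S (J c) j * U j (I c)) := by
          rw [Fintype.sum_prod_type]
          refine Finset.sum_congr rfl fun J _ => ?_
          rw [Finset.mul_sum]
          refine Finset.sum_congr rfl fun j _ => ?_
          rw [hprod]
          ring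
      _ = ∑ J : Fin p → Fin n, (∏ k ∈ univ.erase c, U (J k) (I k)) * ω J *
            (lam (I c) * U (J c) (I c)) := by
          simp_rw [hSU]
      _ = lam (I c) * pull U ω I := by
          rw [pull, Finset.mul_sum]
          refine Finset.sum_congr rfl fun J _ => ?_
          rw [← Finset.mul_prod_erase univ (fun k => U (J k) (I k)) (mem_univ c)]
          ring
  calc pull U Sω I
      = ∑ J : Fin p → Fin n, ∑ c : Fin p,
          (∏ k, U (J k) (I k)) * ∑ j, S j (J c) * ω (Function.update J c j) := by
        rw [pull]
        exact Finset.sum_congr rfl fun J _ => by rw [hSω, Finset.mul_sum]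
    _ = ∑ c : Fin p, ∑ J : Fin p → Fin n,
          (∏ k, U (J k) (I k)) * ∑ j, S j (J c) * ω (Function.update J c j) :=
        Finset.sum_comm
    _ = ∑ c : Fin p, lam (I c) * pull U ω I := by
        exact Finset.sum_congr rfl fun c _ => main c
    _ = (∑ k, lam (I k)) * pull U ω I := by rw [Finset.sum_mul]

lemma sum_lam_sq_le (lam : Fin n → ℝ) (hlam : ∑ i, lam i = 0)
    (I : Fin p → Fin n) (hI : Function.Injective I) :
    (∑ k, lam (I k)) ^ 2 ≤ (p : ℝ) * ((n : ℝ) - p) / n * ∑ i, (lam i) ^ 2 := by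
  rcases Nat.eq_zero_or_pos p with hp | hp
  · subst hp
    simp
  have hn : 0 < n := by
    rcases Nat.eq_zero_or_pos n with hn | hn
    · subst hn; exact (I ⟨0, hp⟩).elim0
    · exact hn
  have hpn : p ≤ n := by
    simpa using Fintype.card_le_of_injective I hI
  set A : Finset (Fin n) := Finset.image I univ with hA
  have hcard : (A.card : ℝ) = p := by
    rw [hA, Finset.card_image_of_injective _ hI]; simp
  set c : Fin n → ℝ := fun i => (if i ∈ A then (1:ℝ) else 0) - p / n with hc
  have hs : ∑ k, lam (I k) = ∑ i, c i * lam i := by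
    simp_rw [hc, sub_mul, ite_mul, one_mul, zero_mul]
    rw [Finset.sum_sub_distrib, Finset.sum_ite_mem, univ_inter, ← Finset.mul_sum,
      hlam, mul_zero, sub_zero, hA, Finset.sum_image (fun a _ b _ h => hI h)]
  have hc2 : ∑ i, (c i) ^ 2 = (p : ℝ) * ((n : ℝ) - p) / n := by
    have hind : ∀ i, ((if i ∈ A then (1:ℝ) else 0)) ^ 2 = (if i ∈ A then (1:ℝ) else 0) := by
      intro i; by_cases h : i ∈ A <;> simp [h]
    simp_rw [hc, sub_sq, hind]
    rw [Finset.sum_add_distrib, Finset.sum_sub_distrib, Finset.sum_ite_mem, univ_inter]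
    have h1 : ∑ i ∈ A, (1:ℝ) = p := by rw [Finset.sum_const, nsmul_eq_mul, mul_one, hcard]
    have h2 : ∑ i : Fin n, (2 : ℝ) * (if i ∈ A then (1:ℝ) else 0) * (p / n)
        = 2 * p * (p / n) := by
      simp_rw [mul_ite, mul_one, mul_zero, ite_mul, zero_mul]
      rw [Finset.sum_ite_mem, univ_inter, Finset.sum_const, nsmul_eq_mul, hcard]
      ring
    rw [h1, h2, Finset.sum_const, Finset.card_univ, Fintype.card_fin, nsmul_eq_mul]
    have hn' : (n : ℝ) ≠ 0 := Nat.cast_ne_zero.mpr hn.ne'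
    field_simp
    ring
  calc (∑ k, lam (I k)) ^ 2 = (∑ i, c i * lam i) ^ 2 := by rw [hs]
    _ ≤ (∑ i, (c i) ^ 2) * ∑ i, (lam i) ^ 2 := Finset.sum_mul_sq_le_sq_mul_sq _ _ _
    _ = (p : ℝ) * ((n : ℝ) - p) / n * ∑ i, (lam i) ^ 2 := by rw [hc2]

lemma exists_eigen (S : Matrix (Fin n) (Fin n) ℝ) (hS : S.IsSymm) :
    ∃ (U : Matrix (Fin n) (Fin n) ℝ) (lam : Fin n → ℝ),
      (∀ a b, (∑ m, U a m * U b m) = if a = b then (1:ℝ) else 0) ∧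
      (∀ r i, (∑ m, S r m * U m i) = lam i * U r i) ∧
      (∑ i, lam i = S.trace) ∧
      ((∑ i, (lam i) ^ 2) = ∑ i, ∑ j, (S i j) ^ 2) := by
  have hH : S.IsHermitian := by
    rw [Matrix.IsHermitian, Matrix.conjTranspose_eq_transpose_of_trivial]
    exact hS
  set U : Matrix (Fin n) (Fin n) ℝ := (Matrix.IsHermitian.eigenvectorUnitary hH : Matrix (Fin n) (Fin n) ℝ) with hU
  set lam : Fin n → ℝ := hH.eigenvalues with hlam
  have hUstar : U * star U = 1 :=
    (Matrix.mem_unitaryGroup_iff).mp (Matrix.IsHermitian.eigenvectorUnitary hH).2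
  have hstarU : star U * U = 1 :=
    (Matrix.mem_unitaryGroup_iff').mp (Matrix.IsHermitian.eigenvectorUnitary hH).2
  have hspec : S = U * Matrix.diagonal lam * star U := by
    have := hH.spectral_theorem
    rwa [RCLike.ofReal_real_eq_id, Function.id_comp] at this
  have hSUmat : S * U = U * Matrix.diagonal lam := by
    rw [hspec, Matrix.mul_assoc, Matrix.mul_assoc, hstarU, Matrix.mul_one]
  refine ⟨U, lam, ?_, ?_, ?_, ?_⟩
  · intro a b
    have := congrFun (congrFun hUstar a) b
    rw [Matrix.mul_apply] at this
    simp only [Matrix.star_apply, star_trivial] at this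
    rw [this, Matrix.one_apply]
  · intro r i
    have := congrFun (congrFun hSUmat r) i
    rw [Matrix.mul_apply, Matrix.mul_diagonal] at this
    rw [this, mul_comm]
  · rw [hspec, Matrix.trace_mul_cycle, hstarU, Matrix.one_mul, Matrix.trace_diagonal]
  · have hSS : S * S = U * Matrix.diagonal (lam * lam) * star U := by
      rw [hspec]
      simp only [← Matrix.mul_assoc]
      rw [Matrix.mul_assoc (U * Matrix.diagonal lam) (star U) U, hstarU, Matrix.mul_one,
        Matrix.mul_assoc U (Matrix.diagonal lam) (Matrix.diagonal lam),
        Matrix.diagonal_mul_diagonal]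
      rfl
    have h1 : (S * S).trace = ∑ i, (lam i) ^ 2 := by
      rw [hSS, Matrix.trace_mul_cycle, hstarU, Matrix.one_mul,
        Matrix.trace_diagonal]
      exact Finset.sum_congr rfl fun i _ => by rw [Pi.mul_apply, pow_two]
    have h2 : (S * S).trace = ∑ i, ∑ j, (S i j) ^ 2 := by
      rw [Matrix.trace]
      refine Finset.sum_congr rfl fun i _ => ?_
      rw [Matrix.diag_apply, Matrix.mul_apply]
      refine Finset.sum_congr rfl fun j _ => ?_
      rw [pow_two, hS.apply i j]
    rw [← h1, h2]

end NSDAaux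


/-- For a `p`-form `ω` and a trace-free symmetric endomorphism `S`,
`|Sω|² ≤ (p(n-p)/n)·|S|²·|ω|²`. -/
theorem norm_sq_derivation_action_le
    (n p : ℕ) (S : Matrix (Fin n) (Fin n) ℝ)
    (hS : S.IsSymm) (hS0 : S.trace = 0)
    (ω : (Fin p → Fin n) → ℝ)
    (hω : ∀ (I : Fin p → Fin n) (a b : Fin p), a ≠ b →
      ω (I ∘ Equiv.swap a b) = - ω I)
    (Sω : (Fin p → Fin n) → ℝ)
    (hSω : ∀ I, Sω I = ∑ k, ∑ j, S j (I k) * ω (Function.update I k j)) :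
    (∑ I : Fin p → Fin n, (Sω I) ^ 2)
      ≤ (p : ℝ) * ((n : ℝ) - p) / n * (∑ i, ∑ j, (S i j) ^ 2)
          * (∑ I : Fin p → Fin n, (ω I) ^ 2) := by
  obtain ⟨U, lam, hU, hSU, htr, hfr⟩ := NSDAaux.exists_eigen S hS
  have hlam0 : ∑ i, lam i = 0 := by rw [htr, hS0]
  have h1 : ∑ I : Fin p → Fin n, (Sω I) ^ 2
      = ∑ I : Fin p → Fin n, (NSDAaux.pull U Sω I) ^ 2 :=
    (NSDAaux.sum_sq_pull U hU Sω).symm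
  have h2 : ∀ I : Fin p → Fin n,
      NSDAaux.pull U Sω I = (∑ k, lam (I k)) * NSDAaux.pull U ω I :=
    NSDAaux.pull_action U S lam hSU ω Sω hSω
  have h3 : ∑ I : Fin p → Fin n, (NSDAaux.pull U ω I) ^ 2
      = ∑ I : Fin p → Fin n, (ω I) ^ 2 :=
    NSDAaux.sum_sq_pull U hU ω
  set C : ℝ := (p : ℝ) * ((n : ℝ) - p) / n * ∑ i, (lam i) ^ 2 with hC
  have hpt : ∀ I : Fin p → Fin n,
      ((∑ k, lam (I k)) * NSDAaux.pull U ω I) ^ 2 ≤ C * (NSDAaux.pull U ω I) ^ 2 := by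
    intro I
    by_cases hinj : Function.Injective I
    · rw [mul_pow]
      exact mul_le_mul_of_nonneg_right (NSDAaux.sum_lam_sq_le lam hlam0 I hinj)
        (sq_nonneg _)
    · rw [NSDAaux.pull_eq_zero_of_not_injective U ω hω I hinj]
      simp
  calc ∑ I : Fin p → Fin n, (Sω I) ^ 2
      = ∑ I : Fin p → Fin n, ((∑ k, lam (I k)) * NSDAaux.pull U ω I) ^ 2 := by
        rw [h1]; exact Finset.sum_congr rfl fun I _ => by rw [h2]
    _ ≤ ∑ I : Fin p → Fin n, C * (NSDAaux.pull U ω I) ^ 2 :=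
        Finset.sum_le_sum fun I _ => hpt I
    _ = C * ∑ I : Fin p → Fin n, (NSDAaux.pull U ω I) ^ 2 := by
        rw [← Finset.mul_sum]
    _ = (p : ℝ) * ((n : ℝ) - p) / n * (∑ i, ∑ j, (S i j) ^ 2)
          * (∑ I : Fin p → Fin n, (ω I) ^ 2) := by
        rw [h3, hC, hfr]
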